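/- Let G be a finite bipartite graph with bipartition (L, R). If X and Y are nonempty subsets of L that both attain the minimum of |Γ(S)|/|S| over all nonempty S ⊆ L, then X ∪ Y also attains this minimum. Consequently, the maximal set minimizing |Γ(S)|/|S| is the union of all nonempty sets minimizing |Γ(S)|/|S|. -/

import Mathlib

/-!
A finite bipartite graph with bipartition `(L, R)` is modelled by its edge set
`E : Finset (L × R)`, with `L` nonempty.  `Minimizing E X` says that the nonempty set
`X ⊆ L` attains the minimum of `|Γ(S)| / |S|` over all nonempty `S ⊆ L`.
-/

variable {L R : Type*}

/-- The neighbourhood `Γ(S) ⊆ R` of a set `S ⊆ L` of left vertices. -/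
def nbhd [DecidableEq L] [DecidableEq R] (E : Finset (L × R)) (S : Finset L) : Finset R :=
  (E.filter (fun e => e.1 ∈ S)).image Prod.snd

/-- `X` is a nonempty subset of `L` attaining the minimum of `|Γ(S)| / |S|` over all
nonempty `S ⊆ L`. -/
def Minimizing [DecidableEq L] [DecidableEq R] (E : Finset (L × R)) (X : Finset L) : Prop :=
  X.Nonempty ∧ ∀ S : Finset L, S.Nonempty →
    ((nbhd E X).card : ℝ) / (X.card : ℝ) ≤ ((nbhd E S).card : ℝ) / (S.card : ℝ)

open scoped Classical

lemma mem_nbhd [DecidableEq L] [DecidableEq R] (E : Finset (L × R)) (S : Finset L) (r : R) :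
    r ∈ nbhd E S ↔ ∃ l, (l, r) ∈ E ∧ l ∈ S := by
  simp only [nbhd, Finset.mem_image, Finset.mem_filter]
  constructor
  · rintro ⟨⟨l, r'⟩, ⟨hE, hS⟩, rfl⟩; exact ⟨l, hE, hS⟩
  · rintro ⟨l, hE, hS⟩; exact ⟨(l, r), ⟨hE, hS⟩, rfl⟩

lemma nbhd_union [DecidableEq L] [DecidableEq R] (E : Finset (L × R)) (X Y : Finset L) :
    nbhd E (X ∪ Y) = nbhd E X ∪ nbhd E Y := by
  ext r
  simp only [mem_nbhd, Finset.mem_union]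
  constructor
  · rintro ⟨l, hE, hl | hl⟩
    · exact Or.inl ⟨l, hE, hl⟩
    · exact Or.inr ⟨l, hE, hl⟩
  · rintro (⟨l, hE, hl⟩ | ⟨l, hE, hl⟩)
    · exact ⟨l, hE, Or.inl hl⟩
    · exact ⟨l, hE, Or.inr hl⟩

lemma nbhd_inter_subset [DecidableEq L] [DecidableEq R] (E : Finset (L × R)) (X Y : Finset L) :
    nbhd E (X ∩ Y) ⊆ nbhd E X ∩ nbhd E Y := by
  intro r hr
  rw [mem_nbhd] at hr
  obtain ⟨l, hE, hl⟩ := hr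
  rw [Finset.mem_inter] at hl ⊢
  exact ⟨(mem_nbhd E X r).2 ⟨l, hE, hl.1⟩, (mem_nbhd E Y r).2 ⟨l, hE, hl.2⟩⟩

lemma minimizing_union_pair [Fintype L] [Fintype R] [DecidableEq L] [DecidableEq R]
    (E : Finset (L × R)) (X Y : Finset L) (hX : Minimizing E X) (hY : Minimizing E Y) :
    Minimizing E (X ∪ Y) := by
  obtain ⟨hXne, hXmin⟩ := hX
  obtain ⟨hYne, hYmin⟩ := hY
  have hUne : (X ∪ Y).Nonempty := hXne.mono Finset.subset_union_left
  refine ⟨hUne, fun S hS => ?_⟩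
  set c : ℝ := ((nbhd E X).card : ℝ) / (X.card : ℝ) with hc
  have hx : (0:ℝ) < X.card := by exact_mod_cast hXne.card_pos
  have hy : (0:ℝ) < Y.card := by exact_mod_cast hYne.card_pos
  have hu : (0:ℝ) < (X ∪ Y).card := by exact_mod_cast hUne.card_pos
  have hax : ((nbhd E X).card : ℝ) = c * X.card := by
    rw [hc]; field_simp
  have hby : ((nbhd E Y).card : ℝ) = c * Y.card := by
    have h1 := hXmin Y hYne
    have h2 := hYmin X hXne
    have heq : ((nbhd E Y).card : ℝ) / Y.card = c := le_antisymm h2 h1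
    rw [← heq]; exact (div_mul_cancel₀ _ hy.ne').symm
  have hcnonneg : 0 ≤ c := by
    rw [hc]; exact div_nonneg (Nat.cast_nonneg _) (Nat.cast_nonneg _)
  -- card relations
  have hcards : ((X ∪ Y).card : ℝ) + ((X ∩ Y).card : ℝ) = (X.card : ℝ) + (Y.card : ℝ) := by
    have := Finset.card_union_add_card_inter X Y
    exact_mod_cast congrArg (Nat.cast : ℕ → ℝ) this
  have hnb : ((nbhd E (X ∪ Y)).card : ℝ) + ((nbhd E (X ∩ Y)).card : ℝ) ≤
      ((nbhd E X).card : ℝ) + ((nbhd E Y).card : ℝ) := by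
    have h1 : (nbhd E (X ∪ Y)).card + (nbhd E X ∩ nbhd E Y).card ≤
        (nbhd E X).card + (nbhd E Y).card := by
      rw [nbhd_union]
      exact le_of_eq (Finset.card_union_add_card_inter _ _)
    have h2 : (nbhd E (X ∩ Y)).card ≤ (nbhd E X ∩ nbhd E Y).card :=
      Finset.card_le_card (nbhd_inter_subset E X Y)
    have := Nat.add_le_add_left h2 (nbhd E (X ∪ Y)).card
    exact_mod_cast le_trans this h1
  have hinter : c * ((X ∩ Y).card : ℝ) ≤ ((nbhd E (X ∩ Y)).card : ℝ) := by
    rcases (X ∩ Y).eq_empty_or_nonempty with h | h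
    · simp [h]
    · have hpos : (0:ℝ) < ((X ∩ Y).card : ℝ) := by exact_mod_cast h.card_pos
      have := hXmin (X ∩ Y) h
      calc c * ((X ∩ Y).card : ℝ)
          ≤ (((nbhd E (X ∩ Y)).card : ℝ) / ((X ∩ Y).card : ℝ)) * ((X ∩ Y).card : ℝ) := by
            exact mul_le_mul_of_nonneg_right this (le_of_lt hpos)
        _ = ((nbhd E (X ∩ Y)).card : ℝ) := by exact div_mul_cancel₀ _ hpos.ne'
  have hkey : ((nbhd E (X ∪ Y)).card : ℝ) ≤ c * ((X ∪ Y).card : ℝ) := by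
    nlinarith [hnb, hinter, hax, hby, hcards]
  have hle : ((nbhd E (X ∪ Y)).card : ℝ) / ((X ∪ Y).card : ℝ) ≤ c := by
    rw [div_le_iff₀ hu]; exact hkey
  exact le_trans hle (hXmin S hS)

lemma minimizing_sup [Fintype L] [Fintype R] [DecidableEq L] [DecidableEq R]
    (E : Finset (L × R)) (T : Finset (Finset L)) (hne : T.Nonempty)
    (h : ∀ S ∈ T, Minimizing E S) : Minimizing E (T.sup id) := by
  induction hne using Finset.Nonempty.cons_induction with
  | singleton a => simpa using h a (by simp)
  | cons a T ha hT ih =>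
      rw [Finset.sup_cons]
      have h1 : Minimizing E a := h a (Finset.mem_cons_self a T)
      have h2 : Minimizing E (T.sup id) := ih (fun S hS => h S (Finset.mem_cons_of_mem hS))
      exact minimizing_union_pair E a (T.sup id) h1 h2

/-- If `X` and `Y` both attain the minimum of `|Γ(S)| / |S|` over nonempty `S ⊆ L`, then
so does `X ∪ Y`.  Consequently, the union of all nonempty minimizing sets is itself a
minimizing set, i.e. the (unique) maximal minimizing set. -/
theorem minimizing_union [Fintype L] [Fintype R] [DecidableEq L] [DecidableEq R]
    [Nonempty L] (E : Finset (L × R)) :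
    (∀ X Y : Finset L, Minimizing E X → Minimizing E Y → Minimizing E (X ∪ Y)) ∧
    (Minimizing E (Finset.univ.filter fun v : L => ∃ S : Finset L, Minimizing E S ∧ v ∈ S) ∧
      ∀ S : Finset L, Minimizing E S →
        S ⊆ Finset.univ.filter fun v : L => ∃ T : Finset L, Minimizing E T ∧ v ∈ T) := by
  refine ⟨fun X Y hX hY => minimizing_union_pair E X Y hX hY, ?_, ?_⟩
  · -- existence of at least one minimizer
    have hexists : ∃ X : Finset L, Minimizing E X := by
      obtain ⟨l⟩ := ‹Nonempty L›
      have hmem : ({l} : Finset L) ∈ (Finset.univ : Finset (Finset L)).filter Finset.Nonempty :=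
        by simp
      obtain ⟨X, hXmem, hXmin⟩ := Finset.exists_min_image
        ((Finset.univ : Finset (Finset L)).filter Finset.Nonempty)
        (fun S => ((nbhd E S).card : ℝ) / (S.card : ℝ)) ⟨_, hmem⟩
      refine ⟨X, (Finset.mem_filter.1 hXmem).2, fun S hS => hXmin S (by simp [hS])⟩
    obtain ⟨X0, hX0⟩ := hexists
    set M : Finset (Finset L) := (Finset.univ : Finset (Finset L)).filter (Minimizing E) with hM
    have hMne : M.Nonempty := ⟨X0, by simp [hM, hX0]⟩
    have hMmin : ∀ S ∈ M, Minimizing E S := fun S hS => (Finset.mem_filter.1 hS).2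
    have hsup := minimizing_sup E M hMne hMmin
    have hU : (Finset.univ.filter fun v : L => ∃ S : Finset L, Minimizing E S ∧ v ∈ S)
        = M.sup id := by
      ext v
      simp only [Finset.mem_filter, Finset.mem_univ, true_and, Finset.mem_sup, id]
      constructor
      · rintro ⟨S, hS, hv⟩
        exact ⟨S, Finset.mem_filter.2 ⟨Finset.mem_univ S, hS⟩, hv⟩
      · rintro ⟨S, hS, hv⟩
        exact ⟨S, (Finset.mem_filter.1 hS).2, hv⟩
    rw [hU]; exact hsup
  · intro S hS v hv
    simp only [Finset.mem_filter, Finset.mem_univ, true_and]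
    exact ⟨S, hS, hv⟩
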